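/- Limit relation defining the q-Krawtchouk polynomial: for nonnegative integers n ≤ N and 0 ≤ x ≤ N, lim_{a→∞} (aq)^{−n} h_n(x; a, b, N; q) = (q^{−N};q)_n (−1)^n q^{binom(n,2)} ∑_{j=0}^{n} (q^{−n};q)_j (q^{−x};q)_j (bq^{n+1})^j / ((q^{−N};q)_j (q;q)_j), where h_n(x; a, b, N; q) = (aq;q)_n (q^{−N};q)_n ∑_{j=0}^{n} (q^{−n};q)_j (abq^{n+1};q)_j (q^{−x};q)_j q^j / ((aq;q)_j (q^{−N};q)_j (q;q)_j) is the q-Hahn polynomial. -/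

import Mathlib

open Finset Filter

noncomputable def qPoch (q a : ℝ) (n : ℕ) : ℝ := ∏ i ∈ Finset.range n, (1 - a * q ^ i)

/-- The q-Hahn polynomials `h_n(x; a, b, N; q)`. -/
noncomputable def qHahn (q a b : ℝ) (N : ℤ) (n : ℕ) (x : ℤ) : ℝ :=
  qPoch q (a * q) n * qPoch q (q ^ (-N)) n *
    ∑ j ∈ Finset.range (n + 1),
      (qPoch q (q ^ (-(n : ℤ))) j * qPoch q (a * b * q ^ ((n : ℤ) + 1)) j *
          qPoch q (q ^ (-x)) j) * q ^ j /
        (qPoch q (a * q) j * qPoch q (q ^ (-N)) j * qPoch q q j)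

lemma ratio_tendsto (c d : ℝ) (hd : d ≠ 0) :
    Tendsto (fun a : ℝ => (1 - a * c) / (1 - a * d)) atTop (nhds (c / d)) := by
  have h1 : Tendsto (fun a : ℝ => (a⁻¹ - c) / (a⁻¹ - d)) atTop (nhds (c / d)) := by
    have hc : Tendsto (fun a : ℝ => a⁻¹ - c) atTop (nhds (0 - c)) :=
      tendsto_inv_atTop_zero.sub_const c
    have hdl : Tendsto (fun a : ℝ => a⁻¹ - d) atTop (nhds (0 - d)) :=
      tendsto_inv_atTop_zero.sub_const d
    have h := hc.div hdl (by simpa using hd)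
    simpa [neg_div_neg_eq, Pi.div_def] using h
  refine h1.congr' ?_
  filter_upwards [eventually_gt_atTop (0:ℝ)] with a ha
  have ha0 : a ≠ 0 := ha.ne'
  have e1 : a⁻¹ - c = (a * (a⁻¹ - c)) / a := by field_simp
  have e2 : (1:ℝ) - a * c = a * (a⁻¹ - c) := by field_simp
  have e3 : (1:ℝ) - a * d = a * (a⁻¹ - d) := by field_simp
  rw [e2, e3, mul_div_mul_left _ _ ha0]

lemma g_tendsto (q : ℝ) (hq0 : 0 < q) (n : ℕ) :
    Tendsto (fun a : ℝ => (a * q) ^ (-(n:ℤ)) * qPoch q (a * q) n) atTop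
      (nhds ((-1)^n * q ^ Nat.choose n 2)) := by
  have hinv : Tendsto (fun a : ℝ => (a * q)⁻¹) atTop (nhds 0) :=
    (tendsto_id.atTop_mul_const hq0).inv_tendsto_atTop
  have hprod := tendsto_finset_prod (Finset.range n)
    (fun i _ => (hinv.sub_const (q ^ i) : Tendsto (fun a : ℝ => (a*q)⁻¹ - q ^ i) atTop (nhds (0 - q ^ i))))
  have hval : (∏ i ∈ Finset.range n, ((0:ℝ) - q ^ i)) = (-1)^n * q ^ Nat.choose n 2 := by
    rw [Nat.choose_two_right, ← Finset.sum_range_id, ← Finset.prod_pow_eq_pow_sum,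
      show ((-1:ℝ))^n = ∏ _i ∈ Finset.range n, (-1:ℝ) by simp, ← Finset.prod_mul_distrib]
    exact Finset.prod_congr rfl fun i _ => by ring
  rw [hval] at hprod
  refine hprod.congr' ?_
  filter_upwards [eventually_gt_atTop (0:ℝ)] with a ha
  have haq : a * q ≠ 0 := by positivity
  rw [qPoch, zpow_neg, zpow_natCast, ← inv_pow,
      show ((a*q)⁻¹)^n = ∏ _i ∈ Finset.range n, (a*q)⁻¹ by simp, ← Finset.prod_mul_distrib]
  refine Finset.prod_congr rfl fun i _ => ?_
  rw [mul_sub, mul_one, ← mul_assoc, inv_mul_cancel₀ haq, one_mul]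

lemma qPoch_neg_exp_ne_zero (q : ℝ) (hq0 : 0 < q) (hq1 : q < 1) (M j : ℕ) (hj : j ≤ M) :
    qPoch q (q ^ (-(M:ℤ))) j ≠ 0 := by
  rw [qPoch]
  refine Finset.prod_ne_zero_iff.mpr fun i hi => ?_
  have hi' : i < M := lt_of_lt_of_le (Finset.mem_range.mp hi) hj
  have h1 : q ^ (-(M:ℤ)) * q ^ i = (q ^ (M - i))⁻¹ := by
    rw [← zpow_natCast q i, ← zpow_add₀ hq0.ne', ← zpow_natCast q (M - i), ← zpow_neg]
    congr 1
    omega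
  have h2 : q ^ (M - i) < 1 := pow_lt_one₀ hq0.le hq1 (by omega)
  rw [h1, sub_ne_zero]
  intro h
  have : q ^ (M - i) = 1 := by rw [← inv_inv (q ^ (M - i)), ← h, inv_one]
  exact h2.ne this

lemma qPoch_q_ne_zero (q : ℝ) (hq0 : 0 < q) (hq1 : q < 1) (j : ℕ) :
    qPoch q q j ≠ 0 := by
  rw [qPoch]
  refine Finset.prod_ne_zero_iff.mpr fun i hi => ?_
  have : q * q ^ i = q ^ (i + 1) := by ring
  rw [this, sub_ne_zero]
  exact fun h => (pow_lt_one₀ hq0.le hq1 (by omega)).ne (h.symm)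

/-- The q-Krawtchouk polynomial as the limit `lim_{a→∞} (aq)^{-n} h_n(x;a,b,N;q)`. -/
theorem qKrawtchouk_limit (q b : ℝ) (N n x : ℕ) (hn : n ≤ N) (hx : x ≤ N)
    (hq0 : 0 < q) (hq1 : q < 1) :
    Filter.Tendsto (fun a : ℝ => (a * q) ^ (-(n : ℤ)) * qHahn q a b (N : ℤ) n (x : ℤ))
      Filter.atTop
      (nhds (qPoch q (q ^ (-(N : ℤ))) n * (-1) ^ n * q ^ Nat.choose n 2 *
        ∑ j ∈ Finset.range (n + 1),
          qPoch q (q ^ (-(n : ℤ))) j * qPoch q (q ^ (-(x : ℤ))) j *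
              (b * q ^ ((n : ℤ) + 1)) ^ j /
            (qPoch q (q ^ (-(N : ℤ))) j * qPoch q q j))) := by
  have hqz : q ^ ((n:ℤ)+1) = q ^ (n+1) := by
    rw [← zpow_natCast q (n+1)]; norm_num
  have hterm : ∀ j ∈ Finset.range (n+1),
      Tendsto (fun a : ℝ =>
        (a*q) ^ (-(n:ℤ)) * (qPoch q (a*q) n * qPoch q (q ^ (-(N:ℤ))) n *
          ((qPoch q (q ^ (-(n:ℤ))) j * qPoch q (a*b*q ^ ((n:ℤ)+1)) j *
              qPoch q (q ^ (-(x:ℤ))) j) * q ^ j /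
            (qPoch q (a*q) j * qPoch q (q ^ (-(N:ℤ))) j * qPoch q q j))))
        atTop
        (nhds (qPoch q (q ^ (-(N:ℤ))) n * ((-1:ℝ)^n * q ^ Nat.choose n 2) *
          (qPoch q (q ^ (-(n:ℤ))) j * qPoch q (q ^ (-(x:ℤ))) j *
              (b * q ^ ((n:ℤ)+1)) ^ j /
            (qPoch q (q ^ (-(N:ℤ))) j * qPoch q q j)))) := by
    intro j hj
    have hg := g_tendsto q hq0 n
    have hratio : ∀ i ∈ Finset.range j,
        Tendsto (fun a : ℝ => (1 - a * (b * q ^ ((n:ℤ)+1) * q ^ i)) / (1 - a * (q * q ^ i)))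
          atTop (nhds (b * q ^ n)) := by
      intro i _
      have hd : q * q ^ i ≠ 0 := by positivity
      have hval : (b * q ^ ((n:ℤ)+1) * q ^ i) / (q * q ^ i) = b * q ^ n := by
        rw [hqz]; field_simp; ring
      rw [← hval]
      exact ratio_tendsto _ _ hd
    have hBD := tendsto_finset_prod (Finset.range j) hratio
    rw [Finset.prod_const, Finset.card_range] at hBD
    have hcomb := ((tendsto_const_nhds (x := qPoch q (q ^ (-(N:ℤ))) n *
      (qPoch q (q ^ (-(n:ℤ))) j * qPoch q (q ^ (-(x:ℤ))) j * q ^ j /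
        (qPoch q (q ^ (-(N:ℤ))) j * qPoch q q j)))).mul hg).mul hBD
    have hfun : ∀ a : ℝ,
        (qPoch q (q ^ (-(N:ℤ))) n *
          (qPoch q (q ^ (-(n:ℤ))) j * qPoch q (q ^ (-(x:ℤ))) j * q ^ j /
            (qPoch q (q ^ (-(N:ℤ))) j * qPoch q q j))) *
          ((a*q) ^ (-(n:ℤ)) * qPoch q (a*q) n) *
          (∏ i ∈ Finset.range j,
            (1 - a * (b * q ^ ((n:ℤ)+1) * q ^ i)) / (1 - a * (q * q ^ i)))
        = (a*q) ^ (-(n:ℤ)) * (qPoch q (a*q) n * qPoch q (q ^ (-(N:ℤ))) n *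
            ((qPoch q (q ^ (-(n:ℤ))) j * qPoch q (a*b*q ^ ((n:ℤ)+1)) j *
                qPoch q (q ^ (-(x:ℤ))) j) * q ^ j /
              (qPoch q (a*q) j * qPoch q (q ^ (-(N:ℤ))) j * qPoch q q j))) := by
      intro a
      rw [Finset.prod_div_distrib,
        show (∏ i ∈ Finset.range j, (1 - a*(b*q^((n:ℤ)+1)*q^i))) = qPoch q (a*b*q^((n:ℤ)+1)) j from by
          unfold qPoch; exact Finset.prod_congr rfl fun i _ => by ring,
        show (∏ i ∈ Finset.range j, (1 - a*(q*q^i))) = qPoch q (a*q) j from by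
          unfold qPoch; exact Finset.prod_congr rfl fun i _ => by ring]
      simp only [div_eq_mul_inv, mul_inv]
      ring
    have hlim : qPoch q (q ^ (-(N:ℤ))) n *
          (qPoch q (q ^ (-(n:ℤ))) j * qPoch q (q ^ (-(x:ℤ))) j * q ^ j /
            (qPoch q (q ^ (-(N:ℤ))) j * qPoch q q j)) *
          ((-1:ℝ)^n * q ^ Nat.choose n 2) * (b * q ^ n) ^ j
        = qPoch q (q ^ (-(N:ℤ))) n * ((-1:ℝ)^n * q ^ Nat.choose n 2) *
          (qPoch q (q ^ (-(n:ℤ))) j * qPoch q (q ^ (-(x:ℤ))) j *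
              (b * q ^ ((n:ℤ)+1)) ^ j /
            (qPoch q (q ^ (-(N:ℤ))) j * qPoch q q j)) := by
      rw [hqz]
      simp only [div_eq_mul_inv]
      ring
    rw [← hlim]
    exact hcomb.congr hfun
  have hsum := tendsto_finset_sum (Finset.range (n+1)) hterm
  rw [show qPoch q (q ^ (-(N:ℤ))) n * (-1:ℝ) ^ n * q ^ Nat.choose n 2 *
        ∑ j ∈ Finset.range (n+1),
          qPoch q (q ^ (-(n:ℤ))) j * qPoch q (q ^ (-(x:ℤ))) j *
              (b * q ^ ((n:ℤ)+1)) ^ j /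
            (qPoch q (q ^ (-(N:ℤ))) j * qPoch q q j)
      = ∑ j ∈ Finset.range (n+1),
          qPoch q (q ^ (-(N:ℤ))) n * ((-1:ℝ)^n * q ^ Nat.choose n 2) *
          (qPoch q (q ^ (-(n:ℤ))) j * qPoch q (q ^ (-(x:ℤ))) j *
              (b * q ^ ((n:ℤ)+1)) ^ j /
            (qPoch q (q ^ (-(N:ℤ))) j * qPoch q q j)) from by
      rw [Finset.mul_sum]
      exact Finset.sum_congr rfl fun j _ => by ring]
  refine hsum.congr fun a => ?_
  rw [qHahn, Finset.mul_sum, Finset.mul_sum]
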